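/- Let A be a Φ-local Φ-ring with maximal ideal 𝔫, S the set of elements generating an admissible ideal, 𝔪 = ⋂_{s ∈ S} s𝔫. Then the image of A in S⁻¹A/𝔪(S⁻¹A) is a valuation subring of the residue field of the local ring S⁻¹A: for any a, s ∈ A ∖ 𝔪, either a ∈ sA or s ∈ aA. -/
import Mathlib


/-- A ring with constructible supports (a `Φ`-ring): a commutative ring together with a
family of finitely generated ideals (the *admissible* ideals) containing the unit ideal,
stable under products, and such that any finitely generated ideal containing an admissible
ideal is admissible. -/
structure PhiRing (A : Type*) [CommRing A] where
  adm : Set (Ideal A)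
  fg_of_mem : ∀ I ∈ adm, I.FG
  top_mem : ⊤ ∈ adm
  mul_mem : ∀ I ∈ adm, ∀ J ∈ adm, I * J ∈ adm
  enlarge_mem : ∀ I ∈ adm, ∀ J : Ideal A, J.FG → I ≤ J → J ∈ adm

/-- The multiplicative set of elements of `A` generating an admissible ideal. -/
def PhiRing.S {A : Type*} [CommRing A] (Φ : PhiRing A) : Submonoid A where
  carrier := {a : A | Ideal.span {a} ∈ Φ.adm}
  one_mem' := by
    show Ideal.span {(1 : A)} ∈ Φ.adm
    rw [Ideal.span_singleton_one]
    exact Φ.top_mem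
  mul_mem' := by
    intro a b ha hb
    show Ideal.span {a * b} ∈ Φ.adm
    rw [← Ideal.span_singleton_mul_span_singleton]
    exact Φ.mul_mem _ ha _ hb

/-- `A` is `Φ`-local if (it is local and) every admissible ideal is invertible;
in a local ring, an ideal is invertible iff it is generated by a single nonzerodivisor. -/
def PhiRing.IsPhiLocal {A : Type*} [CommRing A] (Φ : PhiRing A) : Prop :=
  ∀ I ∈ Φ.adm, ∃ a ∈ nonZeroDivisors A, I = Ideal.span {a}

/-- Key dichotomy: for any `a` and any `t ∈ S`, either `t ∣ a`, or `a ∣ t` and `a ∈ S`. -/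
lemma PhiRing.dichotomy {A : Type*} [CommRing A] [IsLocalRing A] (Φ : PhiRing A)
    (hΦ : Φ.IsPhiLocal) (a t : A) (ht : t ∈ Φ.S) :
    a ∈ Ideal.span ({t} : Set A) ∨ (t ∈ Ideal.span ({a} : Set A) ∧ a ∈ Φ.S) := by
  have hJfg : (Ideal.span {a} ⊔ Ideal.span {t}).FG := by
    rw [← Ideal.span_union]
    exact Submodule.fg_span ((Set.finite_singleton t).insert a)
  have hJadm : (Ideal.span {a} ⊔ Ideal.span {t}) ∈ Φ.adm :=
    Φ.enlarge_mem _ ht _ hJfg le_sup_right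
  obtain ⟨c, hc, hcs⟩ := hΦ _ hJadm
  have ha : a ∈ Ideal.span {c} :=
    hcs ▸ Submodule.mem_sup_left (Ideal.mem_span_singleton_self a)
  have htc : t ∈ Ideal.span {c} :=
    hcs ▸ Submodule.mem_sup_right (Ideal.mem_span_singleton_self t)
  obtain ⟨x, hx⟩ := Ideal.mem_span_singleton.mp ha
  obtain ⟨y, hy⟩ := Ideal.mem_span_singleton.mp htc
  have hcmem : c ∈ Ideal.span {a} ⊔ Ideal.span {t} := hcs ▸ Ideal.mem_span_singleton_self c
  obtain ⟨u, hu, v, hv, huv⟩ := Submodule.mem_sup.mp hcmem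
  obtain ⟨α, hα⟩ := Ideal.mem_span_singleton.mp hu
  obtain ⟨β, hβ⟩ := Ideal.mem_span_singleton.mp hv
  have key : x * α + y * β = 1 := by
    have h1 : c * (x * α + y * β) = c * 1 := by
      rw [mul_one]
      conv_rhs => rw [← huv, hα, hβ, hx, hy]
      ring
    exact (mul_cancel_left_mem_nonZeroDivisors hc).mp h1
  rcases IsLocalRing.isUnit_or_isUnit_of_add_one key with h | h
  · -- x * α is a unit, so x is a unit, so (a) = (c) = (a, t)
    have hxu : IsUnit x := isUnit_of_mul_isUnit_left h
    obtain ⟨x', hx'⟩ := hxu.exists_right_inv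
    have hcax : c = a * x' := by
      rw [hx, mul_assoc, hx', mul_one]
    have heq : Ideal.span ({a} : Set A) = Ideal.span {c} :=
      le_antisymm (Ideal.span_singleton_le_span_singleton.mpr ⟨x, hx⟩)
        (Ideal.span_singleton_le_span_singleton.mpr ⟨x', hcax⟩)
    right
    refine ⟨heq ▸ htc, ?_⟩
    show Ideal.span {a} ∈ Φ.adm
    rw [heq, ← hcs]; exact hJadm
  · -- y * β is a unit, so y is a unit, so (t) = (c) ∋ a
    have hyu : IsUnit y := isUnit_of_mul_isUnit_left h
    obtain ⟨y', hy'⟩ := hyu.exists_right_inv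
    left
    rw [Ideal.mem_span_singleton]
    refine ⟨y' * x, ?_⟩
    have hcty : c = t * y' := by
      rw [hy, mul_assoc, hy', mul_one]
    rw [hx, hcty, mul_assoc]

/-- Let `A` be a `Φ`-local `Φ`-ring with maximal ideal `𝔫`, `S` the set of elements
generating an admissible ideal, and `𝔪 = ⋂_{s ∈ S} s𝔫`.  Then the image of `A` in the
residue field of the local ring `S⁻¹A` is a valuation subring: for any
`a, s ∈ A ∖ 𝔪`, either `a ∈ sA` or `s ∈ aA`. -/

theorem PhiRing.valuation_subring_residue
    {A : Type*} [CommRing A] [IsLocalRing A] (Φ : PhiRing A) (hΦ : Φ.IsPhiLocal)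
    (𝔪 : Ideal A)
    (h𝔪 : 𝔪 = ⨅ s ∈ Φ.S, Ideal.span {s} * IsLocalRing.maximalIdeal A) :
    ∀ a s : A, a ∉ 𝔪 → s ∉ 𝔪 →
      a ∈ Ideal.span ({s} : Set A) ∨ s ∈ Ideal.span ({a} : Set A) := by
  intro a s ha hs
  by_cases haS : a ∈ Φ.S
  · rcases Φ.dichotomy hΦ s a haS with h | ⟨h, _⟩
    · right; exact h
    · left; exact h
  by_cases hsS : s ∈ Φ.S
  · rcases Φ.dichotomy hΦ a s hsS with h | ⟨h, _⟩
    · left; exact h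
    · right; exact h
  -- neither is in S: then a ∈ 𝔪, contradiction
  exfalso
  apply ha
  rw [h𝔪, Submodule.mem_iInf]
  intro t
  rw [Submodule.mem_iInf]
  intro htS
  rcases Φ.dichotomy hΦ a t htS with h | ⟨_, h⟩
  · obtain ⟨b, hb⟩ := Ideal.mem_span_singleton.mp h
    have hbm : b ∈ IsLocalRing.maximalIdeal A := by
      by_contra hbu
      have hbu' : IsUnit b := by
        simpa [IsLocalRing.mem_maximalIdeal, mem_nonunits_iff, not_not] using hbu
      obtain ⟨b', hb'⟩ := hbu'.exists_right_inv
      apply haS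
      show Ideal.span {a} ∈ Φ.adm
      have heq : Ideal.span ({a} : Set A) = Ideal.span {t} :=
        le_antisymm (Ideal.span_singleton_le_span_singleton.mpr ⟨b, hb⟩)
          (Ideal.span_singleton_le_span_singleton.mpr
            ⟨b', by rw [hb, mul_assoc, hb', mul_one]⟩)
      rw [heq]; exact htS
    rw [hb]
    exact Ideal.mul_mem_mul (Ideal.mem_span_singleton_self t) hbm
  · exact absurd h haS
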